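/- Let k ≥ 1 and λ > 2k be real numbers. Then there exist real numbers γ, α, s, r with γ > 1 + k, α > 0, s > 0, 0 < r < α/γ, such that β₁(α, s) > β₂(α, s) and min(r, s) > 1/λ. Consequently, the exponent min(r, s) appearing in the regularization error bound ‖u^ε − u‖_{C⁰} ≤ c ε^{min(r,s)} can be taken larger than 1/λ for any λ > 2k. -/

import Mathlib

/-- `β₁(α, s) = (2 - s + α(2 - 1/k)) / (γ(2 - 1/k) + 1/k - 1)`. -/
noncomputable def beta1 (k γ α s : ℝ) : ℝ :=
  (2 - s + α * (2 - 1 / k)) / (γ * (2 - 1 / k) + 1 / k - 1)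

/-- `β₂(α, s) = (α + k·s) / (γ - k - 1)`. -/
noncomputable def beta2 (k γ α s : ℝ) : ℝ :=
  (α + k * s) / (γ - k - 1)

/-- Key algebraic identity: the cross-multiplied difference `β₁ - β₂` equals
`9(k+1)·k·(u/2 - v)` for our choice of parameters. -/
lemma key_aux (k u v γ : ℝ) (hku : k * u = 1)
    (hγid : γ * (k * (u / 2 - v)) = 9 * (k + 1) * (k * (u / 2 - v)) + (2 * k + 1)) :
    (2 - u / 2 + γ * ((v + u / 2) / 2) * (2 - u)) * (γ - k - 1)
      - (γ * ((v + u / 2) / 2) + k * (u / 2)) * (γ * (2 - u) + u - 1)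
      = 9 * (k + 1) * (k * (u / 2 - v)) := by
  linear_combination hγid + (1 - 2 * γ + v * γ / 2 - u / 2 + 3 * u * γ / 4) * hku

/-- For every `k ≥ 1` and `λ > 2k` there are admissible parameters `γ > 1 + k`,
`α, s > 0`, `0 < r < α/γ` with `β₁(α, s) > β₂(α, s)` and `min(r, s) > 1/λ`; hence the
regularization error rate `ε^{min(r,s)}` can be taken with exponent larger than `1/λ`. -/
theorem exists_params_rate (k lam : ℝ) (hk : 1 ≤ k) (hlam : 2 * k < lam) :
    ∃ γ α s r : ℝ, 1 + k < γ ∧ 0 < α ∧ 0 < s ∧ 0 < r ∧ r < α / γ ∧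
      beta1 k γ α s > beta2 k γ α s ∧ 1 / lam < min r s := by
  have hk0 : (0:ℝ) < k := by linarith
  have hl0 : (0:ℝ) < lam := by linarith
  set u : ℝ := 1 / k with hu
  set v : ℝ := 1 / lam with hv
  have hku : k * u = 1 := by rw [hu]; field_simp
  have hu0 : 0 < u := by positivity
  have hv0 : 0 < v := by positivity
  have hu1 : u ≤ 1 := by rw [hu, div_le_one hk0]; linarith
  have hvu : v < u / 2 := by
    rw [hu, hv, div_div]
    exact one_div_lt_one_div_of_lt (by linarith) (by linarith)
  have hδ0 : 0 < k * (u / 2 - v) := mul_pos hk0 (by linarith)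
  set γ : ℝ := 9 * (k + 1) + (2 * k + 1) / (k * (u / 2 - v)) with hγ
  have hγid : γ * (k * (u / 2 - v)) = 9 * (k + 1) * (k * (u / 2 - v)) + (2 * k + 1) := by
    rw [hγ, add_mul, div_mul_cancel₀ _ hδ0.ne']
  have hγ9 : 9 * (k + 1) ≤ γ := by
    rw [hγ]; nlinarith [div_pos (by linarith : (0:ℝ) < 2 * k + 1) hδ0]
  have hγ0 : (0:ℝ) < γ := by linarith
  set c : ℝ := (v + u / 2) / 2 with hc
  have hc0 : 0 < c := by positivity
  have hvc : v < c := by rw [hc]; linarith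
  have hcu : c < u / 2 := by rw [hc]; linarith
  refine ⟨γ, γ * c, u / 2, (v + c) / 2, by linarith, by positivity, by positivity,
    by positivity, ?_, ?_, ?_⟩
  · rw [mul_div_cancel_left₀ c hγ0.ne']
    linarith
  · unfold beta1 beta2
    have hD2 : (0:ℝ) < γ - k - 1 := by linarith
    have hD1 : (0:ℝ) < γ * (2 - 1 / k) + 1 / k - 1 := by
      rw [← hu]
      nlinarith [mul_nonneg (by linarith : (0:ℝ) ≤ γ - 18) (by linarith : (0:ℝ) ≤ 1 - u)]
    rw [gt_iff_lt, div_lt_div_iff₀ hD2 hD1, ← hu]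
    have key := key_aux k u v γ hku hγid
    rw [← hc] at key
    nlinarith [key, mul_pos (by linarith : (0:ℝ) < 9 * (k + 1)) hδ0]
  · rw [lt_min_iff]
    constructor
    · show v < (v + c) / 2; linarith
    · show v < u / 2; linarith
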